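/- Let p be a probability measure, λ = 3/4, t ∈ [0, 1/2], p* the t-trimmed version of p (p conditioned on a set of p-mass 1−t), and q = λp + (1−λ)p*. Then 1 − H²(p, q) = √λ · t + √((1 − λt)(1 − t)), where H² is the squared Hellinger distance. -/

import Mathlib

open MeasureTheory

/-- For `q = (3/4) p + (1/4) p*`, where `p*` is `p` conditioned on a set `A` of
`p`-mass `1 - t`, the quantity `1 - H²(p,q)` (with `q` given by its density
`3/4 + (1/4)·1_A/(1-t)` with respect to `p`) equals `√(3/4)·t + √((1-(3/4)t)(1-t))`. -/
theorem one_sub_hellinger_mixture (p : Measure ℝ) [IsProbabilityMeasure p]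
    (A : Set ℝ) (hA : MeasurableSet A) (t : ℝ) (ht : t ∈ Set.Icc (0 : ℝ) (1 / 2))
    (hpA : p A = ENNReal.ofReal (1 - t)) :
    1 - (1 / 2) * ∫ x,
        (1 - Real.sqrt (3 / 4 + (1 / 4) * A.indicator (fun _ => 1 / (1 - t)) x)) ^ 2 ∂p
      = Real.sqrt (3 / 4) * t + Real.sqrt ((1 - (3 / 4) * t) * (1 - t)) := by
  obtain ⟨ht0, ht1⟩ := ht
  have h1t : (0:ℝ) < 1 - t := by linarith
  set fA : ℝ := 3 / 4 + (1 / 4) * (1 / (1 - t)) with hfA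
  have hfA0 : 0 ≤ fA := by
    have : 0 ≤ 1 / (1 - t) := by positivity
    simp only [hfA]; linarith
  set a : ℝ := (1 - Real.sqrt fA) ^ 2 with ha
  set b : ℝ := (1 - Real.sqrt (3/4)) ^ 2 with hb
  have hint : ∀ x, (1 - Real.sqrt (3 / 4 + (1 / 4) * A.indicator (fun _ => 1 / (1 - t)) x)) ^ 2
      = A.indicator (fun _ => a) x + Aᶜ.indicator (fun _ => b) x := by
    intro x
    by_cases hx : x ∈ A <;>
      simp [Set.indicator_of_mem, Set.indicator_of_notMem, hx, ha, hb, hfA]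
  have hI : ∫ x, (1 - Real.sqrt (3 / 4 + (1 / 4) * A.indicator (fun _ => 1 / (1 - t)) x)) ^ 2 ∂p
      = a * (1 - t) + b * t := by
    simp_rw [hint]
    rw [integral_add ((integrable_const a).indicator hA)
        ((integrable_const b).indicator hA.compl),
      integral_indicator_const _ hA, integral_indicator_const _ hA.compl]
    have hpAc : p Aᶜ = ENNReal.ofReal t := by
      rw [measure_compl hA (measure_ne_top p A), measure_univ, hpA]
      rw [← ENNReal.ofReal_one, ← ENNReal.ofReal_sub _ (by linarith)]
      norm_num
    rw [measureReal_def, measureReal_def]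
    rw [hpA, hpAc, ENNReal.toReal_ofReal (by linarith), ENNReal.toReal_ofReal ht0]
    simp [mul_comm]
  rw [hI]
  have hs1 : Real.sqrt (3/4) ^ 2 = 3/4 := Real.sq_sqrt (by norm_num)
  have hs2 : Real.sqrt fA ^ 2 = fA := Real.sq_sqrt hfA0
  have hkey : (1 - t) * Real.sqrt fA = Real.sqrt ((1 - (3/4) * t) * (1 - t)) := by
    rw [show (1 - t) = Real.sqrt ((1-t)^2) from (Real.sqrt_sq h1t.le).symm,
      ← Real.sqrt_mul (sq_nonneg _)]
    congr 1
    rw [Real.sqrt_sq h1t.le, hfA]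
    linear_combination ((1 - t) / 4) * mul_one_div_cancel h1t.ne'
  have hfA1 : fA * (1 - t) = 1 - (3/4) * t := by
    rw [hfA]; linear_combination (1 / 4) * mul_one_div_cancel h1t.ne'
  have ha' : a = 1 - 2 * Real.sqrt fA + fA := by rw [ha]; linear_combination hs2
  have hb' : b = 1 - 2 * Real.sqrt (3/4) + 3/4 := by rw [hb]; linear_combination hs1
  rw [ha', hb']
  linear_combination hkey - (1/2) * hfA1
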